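/- For every integer n ≥ 3, the positive co-degree Turán number of K₄⁻ satisfies co⁺ex(n, K₄⁻) = ⌊n/3⌋. -/

import Mathlib

open Finset

/-- The co-degree of a vertex set `S` in the hypergraph with edge set `E`:
the number of edges containing `S`. -/
def coDeg {n : ℕ} (E : Finset (Finset (Fin n))) (S : Finset (Fin n)) : ℕ :=
  (E.filter (fun e => S ⊆ e)).card

/-- The minimum positive co-degree `δ⁺_{r-1}` of an `r`-graph on `Fin n` with edge set `E`:
the largest `k` such that every `(r-1)`-set of vertices contained in at least one edge is
contained in at least `k` edges (i.e. the minimum of the positive co-degrees). -/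
noncomputable def minPosCoDeg (r n : ℕ) (E : Finset (Finset (Fin n))) : ℕ :=
  sInf {d : ℕ | ∃ S : Finset (Fin n), S.card = r - 1 ∧ coDeg E S = d ∧ 0 < d}

/-- `E` contains a copy of `F`: an injection of the vertices of `F` mapping
edges of `F` to edges of `E`. -/
def Contains {α β : Type*} [DecidableEq α] [DecidableEq β]
    (F : Finset (Finset α)) (E : Finset (Finset β)) : Prop :=
  ∃ f : α → β, Function.Injective f ∧ ∀ e ∈ F, e.image f ∈ E

/-- The positive co-degree Turán number `co⁺ex_r(n, F)`: the maximum of the minimum positive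
co-degree over all `F`-free `r`-graphs on `n` vertices with at least one edge. -/
noncomputable def coPlusEx {α : Type*} [DecidableEq α] (r n : ℕ) (F : Finset (Finset α)) : ℕ :=
  sSup {d : ℕ | ∃ E : Finset (Finset (Fin n)),
    (∀ e ∈ E, e.card = r) ∧ E.Nonempty ∧ ¬ Contains F E ∧ minPosCoDeg r n E = d}


def K4minus : Finset (Finset (Fin 4)) := {{0,1,2}, {0,1,3}, {0,2,3}}

def K4 : Finset (Finset (Fin 4)) := {{0,1,2}, {0,1,3}, {0,2,3}, {1,2,3}}

def F5 : Finset (Finset (Fin 5)) := {{0,1,2}, {0,1,3}, {2,3,4}}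

def F32 : Finset (Finset (Fin 5)) := {{0,1,2}, {0,3,4}, {1,3,4}, {2,3,4}}

def Fano : Finset (Finset (Fin 7)) :=
  {{0,1,2}, {2,3,4}, {0,4,5}, {1,3,5}, {0,3,6}, {1,4,6}, {2,5,6}}

def F33 : Finset (Finset (Fin 6)) :=
  {{0,1,2}, {0,3,4}, {0,3,5}, {0,4,5}, {1,3,4}, {1,3,5}, {1,4,5}, {2,3,4}, {2,3,5}, {2,4,5}}

def C5 : Finset (Finset (Fin 5)) := {{0,1,2}, {1,2,3}, {2,3,4}, {0,3,4}, {0,1,4}}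

def C5minus : Finset (Finset (Fin 5)) := {{0,1,2}, {1,2,3}, {2,3,4}, {0,3,4}}

def K222 : Finset (Finset (Fin 6)) :=
  {{0,2,4}, {0,2,5}, {0,3,4}, {0,3,5}, {1,2,4}, {1,2,5}, {1,3,4}, {1,3,5}}

/-- `J k`: the 3-graph on `k+1` vertices whose edges are all triples containing the
distinguished vertex `0`. -/
def Jgraph (k : ℕ) : Finset (Finset (Fin (k+1))) :=
  (Finset.univ.powersetCard 3).filter (fun e => (0 : Fin (k+1)) ∈ e)

/-- `E` is (isomorphic to) the complete balanced `k`-partite 3-graph on `n` vertices: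
there is a partition of the vertices into `k` classes whose sizes differ by at most one,
such that the edges are exactly the triples of vertices in three pairwise distinct classes. -/
def IsCompleteBalancedMultipartite (n k : ℕ) (E : Finset (Finset (Fin n))) : Prop :=
  ∃ f : Fin n → Fin k,
    (∀ i j : Fin k, (Finset.univ.filter (fun v => f v = i)).card ≤
      (Finset.univ.filter (fun v => f v = j)).card + 1) ∧
    ∀ e : Finset (Fin n), e ∈ E ↔ (e.card = 3 ∧ (e.image f).card = 3)

/-- The unique (6,3,2)-design `H₆`. -/
def H6 : Finset (Finset (Fin 6)) :=
  {{0,1,2}, {0,1,3}, {2,3,4}, {2,3,5}, {0,4,5}, {1,4,5}, {0,2,4}, {0,3,5}, {1,2,5}, {1,3,4}}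

/-- `E` is (isomorphic to) a balanced blow-up of `H₆` on `n` vertices: the vertices are
partitioned into six classes of equal size, and the edges are exactly the triples whose
three vertices lie in classes forming an edge of `H₆`. -/
def IsBalancedH6Blowup (n : ℕ) (E : Finset (Finset (Fin n))) : Prop :=
  ∃ f : Fin n → Fin 6,
    (∀ i j : Fin 6, (Finset.univ.filter (fun v => f v = i)).card =
      (Finset.univ.filter (fun v => f v = j)).card) ∧
    ∀ e : Finset (Fin n), e ∈ E ↔ (e.card = 3 ∧ e.image f ∈ H6)

def resid (n : ℕ) (v : Fin n) : Fin 3 := ⟨v.val % 3, Nat.mod_lt _ (by norm_num)⟩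

def triE (n : ℕ) : Finset (Finset (Fin n)) :=
  (Finset.univ.powersetCard 3).filter (fun e => (e.image (resid n)).card = 3)

lemma mem_triE {n : ℕ} (e : Finset (Fin n)) :
    e ∈ triE n ↔ e.card = 3 ∧ (e.image (resid n)).card = 3 := by
  simp [triE, Finset.mem_powersetCard_univ]

lemma three_ne {α : Type*} [DecidableEq α] {x y z : α}
    (h : ({x,y,z} : Finset α).card = 3) : x ≠ y ∧ x ≠ z ∧ y ≠ z := by
  have hle : ∀ (u v : α), (({u,v} : Finset α)).card ≤ 2 :=
    fun u v => (card_insert_le _ _).trans (by simp)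
  refine ⟨fun hxy => ?_, fun hxz => ?_, fun hyz => ?_⟩
  · have heq : ({x,y,z} : Finset α) = {y,z} := by
      ext v; simp [hxy, or_comm, or_assoc, or_left_comm]
    rw [heq] at h; have := hle y z; omega
  · have heq : ({x,y,z} : Finset α) = {y,z} := by
      ext v; simp [hxz, or_comm, or_assoc, or_left_comm]
    rw [heq] at h; have := hle y z; omega
  · have heq : ({x,y,z} : Finset α) = {x,z} := by
      ext v; simp [hyz, or_comm, or_assoc, or_left_comm]
    rw [heq] at h; have := hle x z; omega

lemma card_three {α : Type*} [DecidableEq α] {x y z : α}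
    (hxy : x ≠ y) (hxz : x ≠ z) (hyz : y ≠ z) : ({x,y,z} : Finset α).card = 3 := by
  rw [card_insert_of_notMem (by simp [hxy, hxz]),
      card_insert_of_notMem (by simp [hyz]), card_singleton]

lemma coDeg_pair {n : ℕ} (E : Finset (Finset (Fin n)))
    (h3 : ∀ e ∈ E, e.card = 3) (a b : Fin n) (hab : a ≠ b) :
    coDeg E {a,b} = (univ.filter (fun w => ({a,b,w} : Finset (Fin n)) ∈ E)).card := by
  have hcab : ({a,b} : Finset (Fin n)).card = 2 := by
    rw [card_insert_of_notMem (by simpa using hab), card_singleton]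
  have hset : E.filter (fun e => ({a,b} : Finset (Fin n)) ⊆ e) =
      (univ.filter (fun w => ({a,b,w} : Finset (Fin n)) ∈ E)).image
        (fun w => ({a,b,w} : Finset (Fin n))) := by
    ext e
    simp only [mem_filter, mem_image, mem_univ, true_and]
    constructor
    · rintro ⟨heE, hsub⟩
      have h1 : (e \ {a,b}).card = 1 := by
        rw [card_sdiff_of_subset hsub, h3 e heE, hcab]
      obtain ⟨w, hw⟩ := Finset.card_eq_one.mp h1
      have he' : e = {a,b,w} := by
        rw [← union_sdiff_of_subset hsub, hw]
        ext v; simp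
        try tauto
      exact ⟨w, he' ▸ heE, he'.symm⟩
    · rintro ⟨w, hwE, rfl⟩
      exact ⟨hwE, by intro v hv; simp at hv ⊢; tauto⟩
  rw [coDeg, hset, Finset.card_image_of_injOn]
  intro w hw w' hw' heq
  simp only [mem_coe, mem_filter, mem_univ, true_and] at hw hw'
  obtain ⟨_, haw, hbw⟩ := three_ne (h3 _ hw)
  simp only [] at heq
  have : w ∈ ({a,b,w'} : Finset (Fin n)) := by rw [← heq]; simp
  simp at this
  tauto

lemma image_triple {α β : Type*} [DecidableEq α] [DecidableEq β] (f : α → β) (a b w : α) :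
    ({a,b,w} : Finset α).image f = {f a, f b, f w} := by
  simp [Finset.image_insert, Finset.image_singleton]

lemma mem_triE_triple {n : ℕ} (a b w : Fin n) (hr : resid n a ≠ resid n b) :
    ({a,b,w} : Finset (Fin n)) ∈ triE n ↔
      (resid n w ≠ resid n a ∧ resid n w ≠ resid n b) := by
  rw [mem_triE, image_triple]
  constructor
  · rintro ⟨-, him⟩
    obtain ⟨-, h2, h3⟩ := three_ne him
    exact ⟨fun h => h2 h.symm, fun h => h3 h.symm⟩
  · rintro ⟨h1, h2⟩
    have hab : a ≠ b := fun h => hr (h ▸ rfl)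
    have haw : a ≠ w := fun h => h1 (by rw [h])
    have hbw : b ≠ w := fun h => h2 (by rw [h])
    exact ⟨card_three hab haw hbw, card_three hr (Ne.symm h1) (Ne.symm h2)⟩

lemma classCard {n : ℕ} (hn : 3 ≤ n) (c : Fin 3) :
    (univ.filter (fun v : Fin n => resid n v = c)).card = (n + 2 - c.val) / 3 := by
  have hc : c.val < 3 := c.isLt
  rw [← Finset.card_range ((n + 2 - c.val) / 3)]
  apply Finset.card_nbij' (fun v => v.val / 3)
    (fun k => ⟨(3 * k + c.val) % n, Nat.mod_lt _ (by omega)⟩)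
  · intro v hv
    simp only [Finset.mem_coe, mem_filter, mem_univ, true_and, resid, Fin.ext_iff] at hv
    simp only [Finset.mem_coe, Finset.mem_range]
    have := v.isLt
    omega
  · intro k hk
    simp only [Finset.mem_coe, Finset.mem_range] at hk
    have hlt : 3 * k + c.val < n := by omega
    simp only [Finset.mem_coe, mem_filter, mem_univ, true_and, resid, Fin.ext_iff]
    simp [Nat.mod_eq_of_lt hlt]
  · intro v hv
    simp only [Finset.mem_coe, mem_filter, mem_univ, true_and, resid, Fin.ext_iff] at hv
    apply Fin.ext
    simp only []
    have := v.isLt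
    have h1 : 3 * (v.val / 3) + c.val = v.val := by omega
    rw [h1, Nat.mod_eq_of_lt v.isLt]
  · intro k hk
    simp only [Finset.mem_coe, Finset.mem_range] at hk
    have hlt : 3 * k + c.val < n := by omega
    simp only [Nat.mod_eq_of_lt hlt]
    omega

lemma triE_coDeg {n : ℕ} (hn : 3 ≤ n) (a b : Fin n) (hr : resid n a ≠ resid n b) :
    coDeg (triE n) {a,b} =
      n - (n + 2 - (resid n a).val) / 3 - (n + 2 - (resid n b).val) / 3 := by
  have h3 : ∀ e ∈ triE n, e.card = 3 := fun e he => ((mem_triE e).mp he).1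
  have hab : a ≠ b := fun h => hr (h ▸ rfl)
  rw [coDeg_pair _ h3 a b hab]
  have hfe : univ.filter (fun w => ({a,b,w} : Finset (Fin n)) ∈ triE n) =
      univ.filter (fun w => ¬(resid n w = resid n a ∨ resid n w = resid n b)) := by
    apply filter_congr
    intro w _
    rw [mem_triE_triple a b w hr]
    simp only [not_or]
  rw [hfe, Finset.filter_not, card_sdiff_of_subset (filter_subset _ _), Finset.filter_or,
      card_union_of_disjoint, classCard hn, classCard hn]
  · simp only [card_univ, Fintype.card_fin]
    omega
  · rw [Finset.disjoint_filter]
    intro w _ h1 h2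
    exact hr (h1 ▸ h2 ▸ rfl)

lemma contains_K4m {n : ℕ} (E : Finset (Finset (Fin n))) {p q r w : Fin n}
    (hpq : p ≠ q) (hpr : p ≠ r) (hpw : p ≠ w) (hqr : q ≠ r) (hqw : q ≠ w) (hrw : r ≠ w)
    (h1 : ({p,q,r} : Finset (Fin n)) ∈ E) (h2 : ({p,q,w} : Finset (Fin n)) ∈ E)
    (h3 : ({p,r,w} : Finset (Fin n)) ∈ E) : Contains K4minus E := by
  refine ⟨![p,q,r,w], ?_, ?_⟩
  · intro i j hij
    fin_cases i <;> fin_cases j <;> simp_all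
  · intro e he
    simp only [K4minus, mem_insert, mem_singleton] at he
    rcases he with rfl | rfl | rfl <;> rw [image_triple] <;> simp <;> assumption

lemma resid_ne_of_rainbow {n : ℕ} {e : Finset (Fin n)} (he : e ∈ triE n)
    {a b : Fin n} (ha : a ∈ e) (hb : b ∈ e) (hab : a ≠ b) : resid n a ≠ resid n b := by
  obtain ⟨hc, him⟩ := (mem_triE e).mp he
  have hinj : Set.InjOn (resid n) e := Finset.card_image_iff.mp (by rw [him, hc])
  exact fun h => hab (hinj ha hb h)

lemma triE_K4m_free {n : ℕ} : ¬ Contains K4minus (triE n) := by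
  rintro ⟨f, hinj, hmap⟩
  have hf : ∀ i j : Fin 4, i ≠ j → f i ≠ f j := fun i j hij h => hij (hinj h)
  have h1 := hmap {0,1,2} (by decide)
  have h2 := hmap {0,1,3} (by decide)
  have h3 := hmap {0,2,3} (by decide)
  rw [image_triple] at h1 h2 h3
  have r01 : resid n (f 0) ≠ resid n (f 1) :=
    resid_ne_of_rainbow h1 (by simp) (by simp) (hf 0 1 (by decide))
  have r02 : resid n (f 0) ≠ resid n (f 2) :=
    resid_ne_of_rainbow h1 (by simp) (by simp) (hf 0 2 (by decide))
  have r12 : resid n (f 1) ≠ resid n (f 2) :=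
    resid_ne_of_rainbow h1 (by simp) (by simp) (hf 1 2 (by decide))
  have r03 : resid n (f 0) ≠ resid n (f 3) :=
    resid_ne_of_rainbow h2 (by simp) (by simp) (hf 0 3 (by decide))
  have r13 : resid n (f 1) ≠ resid n (f 3) :=
    resid_ne_of_rainbow h2 (by simp) (by simp) (hf 1 3 (by decide))
  have r23 : resid n (f 2) ≠ resid n (f 3) :=
    resid_ne_of_rainbow h3 (by simp) (by simp) (hf 2 3 (by decide))
  have b0 : (resid n (f 0)).val < 3 := (resid n (f 0)).isLt
  have b1 : (resid n (f 1)).val < 3 := (resid n (f 1)).isLt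
  have b2 : (resid n (f 2)).val < 3 := (resid n (f 2)).isLt
  have b3 : (resid n (f 3)).val < 3 := (resid n (f 3)).isLt
  simp only [Ne, Fin.ext_iff] at r01 r02 r12 r03 r13 r23
  omega

lemma triE_card3 {n : ℕ} : ∀ e ∈ triE n, e.card = 3 :=
  fun e he => ((mem_triE e).mp he).1

lemma triE_nonempty {n : ℕ} (hn : 3 ≤ n) : (triE n).Nonempty := by
  refine ⟨{⟨0, by omega⟩, ⟨1, by omega⟩, ⟨2, by omega⟩}, ?_⟩
  rw [mem_triE, image_triple]
  constructor
  · exact card_three (by simp [Fin.ext_iff]) (by simp [Fin.ext_iff]) (by simp [Fin.ext_iff])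
  · exact card_three (by simp [resid, Fin.ext_iff]) (by simp [resid, Fin.ext_iff])
      (by simp [resid, Fin.ext_iff])

lemma triE_minPosCoDeg {n : ℕ} (hn : 3 ≤ n) : minPosCoDeg 3 n (triE n) = n / 3 := by
  set D := {d : ℕ | ∃ S : Finset (Fin n), S.card = 3 - 1 ∧ coDeg (triE n) S = d ∧ 0 < d} with hD
  have hmem : n / 3 ∈ D := by
    refine ⟨{⟨0, by omega⟩, ⟨1, by omega⟩}, ?_, ?_, by omega⟩
    · rw [card_insert_of_notMem (by simp [Fin.ext_iff]), card_singleton]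
    · have hr : resid n ⟨0, by omega⟩ ≠ resid n ⟨1, by omega⟩ := by
        simp [resid, Fin.ext_iff]
      have h0 : (resid n (⟨0, by omega⟩ : Fin n)).val = 0 := by norm_num [resid]
      have h1 : (resid n (⟨1, by omega⟩ : Fin n)).val = 1 := by norm_num [resid]
      rw [triE_coDeg hn _ _ hr, h0, h1]
      omega
  have hbound : ∀ d ∈ D, n / 3 ≤ d := by
    rintro d ⟨S, hS2, hSd, hdpos⟩
    obtain ⟨a, b, hab, rfl⟩ := Finset.card_eq_two.mp hS2
    have hpos : 0 < ((triE n).filter (fun e => ({a,b} : Finset (Fin n)) ⊆ e)).card := by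
      have hSd' : coDeg (triE n) {a,b} = d := hSd
      unfold coDeg at hSd'
      omega
    obtain ⟨e, he⟩ := Finset.card_pos.mp hpos
    rw [mem_filter] at he
    have hr : resid n a ≠ resid n b :=
      resid_ne_of_rainbow he.1 (he.2 (by simp)) (he.2 (by simp)) hab
    rw [triE_coDeg hn a b hr] at hSd
    have := (resid n a).isLt
    have := (resid n b).isLt
    have hne : (resid n a).val ≠ (resid n b).val := fun h => hr (Fin.ext h)
    omega
  exact le_antisymm (Nat.sInf_le hmem) (le_csInf ⟨_, hmem⟩ hbound)

lemma upper_bound {n : ℕ} (hn : 3 ≤ n) (E : Finset (Finset (Fin n)))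
    (h3 : ∀ e ∈ E, e.card = 3) (hne : E.Nonempty) (hfree : ¬ Contains K4minus E) :
    minPosCoDeg 3 n E ≤ n / 3 := by
  set d := minPosCoDeg 3 n E with hd
  obtain ⟨e, he⟩ := hne
  obtain ⟨x, y, z, hxy, hxz, hyz, rfl⟩ := Finset.card_eq_three.mp (h3 e he)
  have hpair : ∀ a b : Fin n, a ≠ b → ({a,b} : Finset (Fin n)) ∈ E.filter
      (fun e => ({a,b} : Finset (Fin n)) ⊆ e) → True := fun _ _ _ _ => trivial
  -- the three neighbourhoods
  set Nxy := univ.filter (fun w => ({x,y,w} : Finset (Fin n)) ∈ E) with hNxy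
  set Nxz := univ.filter (fun w => ({x,z,w} : Finset (Fin n)) ∈ E) with hNxz
  set Nyz := univ.filter (fun w => ({y,z,w} : Finset (Fin n)) ∈ E) with hNyz
  have hcd : ∀ a b : Fin n, a ≠ b → 0 < coDeg E {a,b} → d ≤ coDeg E {a,b} := by
    intro a b hab hpos
    apply Nat.sInf_le
    exact ⟨{a,b}, by
      rw [card_insert_of_notMem (by simpa using hab), card_singleton], rfl, hpos⟩
  have hsub_xy : ({x,y} : Finset (Fin n)) ⊆ {x,y,z} := by intro v hv; simp at hv ⊢; tauto
  have hsub_xz : ({x,z} : Finset (Fin n)) ⊆ {x,y,z} := by intro v hv; simp at hv ⊢; tauto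
  have hsub_yz : ({y,z} : Finset (Fin n)) ⊆ {x,y,z} := by intro v hv; simp at hv ⊢; tauto
  have hpos_xy : 0 < coDeg E {x,y} :=
    Finset.card_pos.mpr ⟨_, mem_filter.mpr ⟨he, hsub_xy⟩⟩
  have hpos_xz : 0 < coDeg E {x,z} :=
    Finset.card_pos.mpr ⟨_, mem_filter.mpr ⟨he, hsub_xz⟩⟩
  have hpos_yz : 0 < coDeg E {y,z} :=
    Finset.card_pos.mpr ⟨_, mem_filter.mpr ⟨he, hsub_yz⟩⟩
  have hdxy : d ≤ Nxy.card := by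
    rw [hNxy, ← coDeg_pair E h3 x y hxy]; exact hcd x y hxy hpos_xy
  have hdxz : d ≤ Nxz.card := by
    rw [hNxz, ← coDeg_pair E h3 x z hxz]; exact hcd x z hxz hpos_xz
  have hdyz : d ≤ Nyz.card := by
    rw [hNyz, ← coDeg_pair E h3 y z hyz]; exact hcd y z hyz hpos_yz
  -- pairwise disjoint
  have comm3 : ∀ a b c : Fin n, ({a,b,c} : Finset (Fin n)) = {b,a,c} := by
    intro a b c; ext v; simp; tauto
  have disj1 : Disjoint Nxy Nxz := by
    rw [Finset.disjoint_filter]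
    intro w _ hw1 hw2
    obtain ⟨-, hxw, hyw⟩ := three_ne (h3 _ hw1)
    obtain ⟨-, -, hzw⟩ := three_ne (h3 _ hw2)
    exact hfree (contains_K4m E hxy hxz hxw hyz hyw hzw he hw1 hw2)
  have disj2 : Disjoint Nxy Nyz := by
    rw [Finset.disjoint_filter]
    intro w _ hw1 hw2
    obtain ⟨-, hxw, hyw⟩ := three_ne (h3 _ hw1)
    obtain ⟨-, -, hzw⟩ := three_ne (h3 _ hw2)
    have he' : ({y,x,z} : Finset (Fin n)) ∈ E := by rw [comm3]; exact he
    have hw1' : ({y,x,w} : Finset (Fin n)) ∈ E := by rw [comm3]; exact hw1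
    exact hfree (contains_K4m E (Ne.symm hxy) hyz hyw hxz hxw hzw he' hw1' hw2)
  have disj3 : Disjoint Nxz Nyz := by
    rw [Finset.disjoint_filter]
    intro w _ hw1 hw2
    obtain ⟨-, hxw, hzw⟩ := three_ne (h3 _ hw1)
    obtain ⟨-, hyw, -⟩ := three_ne (h3 _ hw2)
    have he' : ({z,x,y} : Finset (Fin n)) ∈ E := by
      rw [show ({z,x,y} : Finset (Fin n)) = {x,y,z} from by ext v; simp; tauto]
      exact he
    have hw1' : ({z,x,w} : Finset (Fin n)) ∈ E := by rw [comm3]; exact hw1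
    have hw2' : ({z,y,w} : Finset (Fin n)) ∈ E := by rw [comm3]; exact hw2
    exact hfree (contains_K4m E (Ne.symm hxz) (Ne.symm hyz) hzw hxy hxw hyw he' hw1' hw2')
  have hcard : Nxy.card + Nxz.card + Nyz.card ≤ n := by
    have h1 : (Nxy ∪ Nxz ∪ Nyz).card = Nxy.card + Nxz.card + Nyz.card := by
      rw [card_union_of_disjoint, card_union_of_disjoint disj1]
      exact Finset.disjoint_union_left.mpr ⟨disj2, disj3⟩
    calc Nxy.card + Nxz.card + Nyz.card = (Nxy ∪ Nxz ∪ Nyz).card := h1.symm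
      _ ≤ (univ : Finset (Fin n)).card := card_le_card (subset_univ _)
      _ = n := by simp
  omega

/-- For every integer `n ≥ 3`, `co⁺ex(n, K₄⁻) = ⌊n/3⌋`. -/
theorem coPlusEx_K4minus (n : ℕ) (hn : 3 ≤ n) :
    coPlusEx 3 n K4minus = n / 3 := by
  have hmem : n / 3 ∈ {d : ℕ | ∃ E : Finset (Finset (Fin n)),
      (∀ e ∈ E, e.card = 3) ∧ E.Nonempty ∧ ¬ Contains K4minus E ∧ minPosCoDeg 3 n E = d} :=
    ⟨triE n, triE_card3, triE_nonempty hn, triE_K4m_free, triE_minPosCoDeg hn⟩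
  have hub : ∀ d ∈ {d : ℕ | ∃ E : Finset (Finset (Fin n)),
      (∀ e ∈ E, e.card = 3) ∧ E.Nonempty ∧ ¬ Contains K4minus E ∧ minPosCoDeg 3 n E = d},
      d ≤ n / 3 := by
    rintro d ⟨E, h3, hne, hfree, rfl⟩
    exact upper_bound hn E h3 hne hfree
  exact le_antisymm (csSup_le ⟨_, hmem⟩ hub) (le_csSup ⟨n / 3, hub⟩ hmem)
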